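/- Eckart–Young for the TQt-SVD (error formula): let A have TQt-SVD A = U ⋆_QT D ⋆_QT V^H with the transforms T_n = c_n U_n (c_n nonzero real, U_n unitary quaternion), and let A_s = Σ_{k=1}^{s} U(:,k,:,…,:) ⋆_QT D(k,k,:,…,:) ⋆_QT V(:,k,:,…,:)^H be the TQt-rank-s truncation. Then ‖A − A_s‖_F² = (∏_n c_n⁻²) · Σ_{k=s+1}^{r} ‖D̂(k,k,:,…,:)‖_F², where r is the TQt-rank of A; in particular, with the singular-value convention σ_k = ‖D(k,k,:,…,:)‖_F one obtains ‖A − A_s‖_F² = Σ_{k=s+1}^{r} σ_k² when the product of the constants ∏|c_n| = 1. -/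

import Mathlib

open scoped Quaternion
open Matrix

noncomputable section

/-- An `L`th-order quaternion tensor, modeled as a family of frontal-slice
quaternion matrices indexed by the multi-index `ν = (n₃,…,n_L) : ι`. -/
abbrev QT (ι : Type*) (m n : ℕ) := ι → Matrix (Fin m) (Fin n) ℍ[ℝ]

variable {ι : Type*} [Fintype ι] [DecidableEq ι]

/-- The hat transform `Â = A ×₃ T₃ ⋯ ×_L T_L`, with `T` the combined invertible
quaternion transform acting on the tube fibers. -/
def hatT (T : Matrix ι ι ℍ[ℝ]) {m n : ℕ} (A : QT ι m n) : QT ι m n :=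
  fun ν i j => ∑ μ, T ν μ * A μ i j

/-- The facewise product `⋆_QF`: slice-wise quaternion matrix product. -/
def qf {m p n : ℕ} (A : QT ι m p) (B : QT ι p n) : QT ι m n :=
  fun ν => A ν * B ν

/-- The `⋆_QT` product; `T` is the combined transform and `S` its inverse. -/
def qt (T S : Matrix ι ι ℍ[ℝ]) {m p n : ℕ} (A : QT ι m p) (B : QT ι p n) : QT ι m n :=
  hatT S (qf (hatT T A) (hatT T B))

/-- The identity quaternion tensor: every transform-domain slice is `I_P`. -/
def qtId (S : Matrix ι ι ℍ[ℝ]) (p : ℕ) : QT ι p p := hatT S (fun _ => 1)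

/-- Conjugate transpose, defined slice-wise in the transform domain. -/
def qtH (T S : Matrix ι ι ℍ[ℝ]) {m n : ℕ} (A : QT ι m n) : QT ι n m :=
  hatT S (fun ν => (hatT T A ν)ᴴ)

/-- A quaternion matrix is unitary. -/
def qUnitaryM {p : Type*} [Fintype p] [DecidableEq p] (Q : Matrix p p ℍ[ℝ]) : Prop :=
  Qᴴ * Q = 1 ∧ Q * Qᴴ = 1

/-- A quaternion tensor is unitary for the `⋆_QT` product. -/
def qtUnitary (T S : Matrix ι ι ℍ[ℝ]) {p : ℕ} (U : QT ι p p) : Prop :=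
  qt T S (qtH T S U) U = qtId S p ∧ qt T S U (qtH T S U) = qtId S p

/-- Frobenius norm of a quaternion tensor. -/
def frob {m n : ℕ} (A : QT ι m n) : ℝ :=
  Real.sqrt (∑ ν, ∑ i, ∑ j, ‖A ν i j‖ ^ 2)

/-- Frobenius norm of a quaternion matrix. -/
def frobM {m n : ℕ} (M : Matrix (Fin m) (Fin n) ℍ[ℝ]) : ℝ :=
  Real.sqrt (∑ i, ∑ j, ‖M i j‖ ^ 2)

/-- The `k`-th diagonal tube `D(k,k,:,…,:)` of a quaternion tensor. -/
def diagTube {m n : ℕ} (D : QT ι m n) (k : ℕ) : ι → ℍ[ℝ] :=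
  fun ν => if h : k < m ∧ k < n then D ν ⟨k, h.1⟩ ⟨k, h.2⟩ else 0

/-- Frobenius norm of the `k`-th diagonal tube. -/
def tubeNorm {m n : ℕ} (D : QT ι m n) (k : ℕ) : ℝ :=
  Real.sqrt (∑ ν, ‖diagTube D k ν‖ ^ 2)

/-- The TQt-rank: the number of nonzero diagonal tubes of the f-diagonal factor. -/
def tqtRank {m n : ℕ} (D : QT ι m n) : ℕ :=
  ((Finset.range (min m n)).filter (fun k => 0 < tubeNorm D k)).card

/-- Rank of a quaternion matrix: dimension of the span of its columns as a
right `ℍ`-module (i.e. a module over `ℍᵐᵒᵖ`). -/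
def qrank {m n : ℕ} (M : Matrix (Fin m) (Fin n) ℍ[ℝ]) : ℕ :=
  Module.finrank ℍ[ℝ]ᵐᵒᵖ
    (Submodule.span ℍ[ℝ]ᵐᵒᵖ (Set.range fun j : Fin n => fun i : Fin m => M i j))

/-- Real diagonal quaternion matrix with diagonal entries `σ 0, σ 1, …`. -/
def realDiag (m n : ℕ) (σ : ℕ → ℝ) : Matrix (Fin m) (Fin n) ℍ[ℝ] :=
  fun i j => if (i : ℕ) = (j : ℕ) then ((σ (i : ℕ) : ℝ) : ℍ[ℝ]) else 0

/-- Truncated real diagonal matrix keeping only the first `s` diagonal entries. -/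
def realDiagTrunc (m n : ℕ) (σ : ℕ → ℝ) (s : ℕ) : Matrix (Fin m) (Fin n) ℍ[ℝ] :=
  fun i j => if (i : ℕ) = (j : ℕ) ∧ (i : ℕ) < s then ((σ (i : ℕ) : ℝ) : ℍ[ℝ]) else 0


/-! ### Auxiliary lemmas -/

lemma re_sum' {α : Type*} (s : Finset α) (f : α → ℍ[ℝ]) :
    (∑ a ∈ s, f a).re = ∑ a ∈ s, (f a).re :=
  map_sum (QuaternionAlgebra.reₗ (R := ℝ) (c₁ := -1) (c₂ := 0) (c₃ := -1)) f s

lemma normSq_eq_aux (q : ℍ[ℝ]) : ‖q‖ ^ 2 = (star q * q).re := by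
  rw [Quaternion.star_mul_self, Quaternion.re_coe, Quaternion.normSq_eq_norm_mul_self, sq]

lemma normSq_eq_aux' (q : ℍ[ℝ]) : ‖q‖ ^ 2 = (q * star q).re := by
  rw [Quaternion.self_mul_star, Quaternion.re_coe, Quaternion.normSq_eq_norm_mul_self, sq]

lemma unitary_left_aux {κ : Type*} [Fintype κ] [DecidableEq κ] (Q : Matrix κ κ ℍ[ℝ])
    (hQ : Qᴴ * Q = 1) (x : κ → ℍ[ℝ]) :
    ∑ ν, ‖∑ μ, Q ν μ * x μ‖ ^ 2 = ∑ μ, ‖x μ‖ ^ 2 := by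
  have key : ∀ μ ρ, ∑ ν, star (Q ν μ) * Q ν ρ = if μ = ρ then 1 else 0 := by
    intro μ ρ
    have := congrFun (congrFun hQ μ) ρ
    simpa [Matrix.mul_apply, Matrix.conjTranspose_apply, Matrix.one_apply] using this
  simp only [normSq_eq_aux]
  rw [← re_sum', ← re_sum']
  congr 1
  calc ∑ ν, star (∑ μ, Q ν μ * x μ) * ∑ μ, Q ν μ * x μ
      = ∑ ν, ∑ μ, ∑ ρ, (star (x μ) * star (Q ν μ)) * (Q ν ρ * x ρ) := by
        simp only [star_sum, StarMul.star_mul, Finset.sum_mul_sum]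
    _ = ∑ μ, ∑ ρ, star (x μ) * (∑ ν, star (Q ν μ) * Q ν ρ) * x ρ := by
        rw [Finset.sum_comm]
        refine Finset.sum_congr rfl fun μ _ => ?_
        rw [Finset.sum_comm]
        refine Finset.sum_congr rfl fun ρ _ => ?_
        rw [Finset.mul_sum, Finset.sum_mul]
        exact Finset.sum_congr rfl fun ν _ => by noncomm_ring
    _ = ∑ μ, star (x μ) * x μ := by
        refine Finset.sum_congr rfl fun μ _ => ?_
        rw [Finset.sum_eq_single μ]
        · rw [key, if_pos rfl, mul_one]
        · intro ρ _ hρ; rw [key, if_neg (Ne.symm hρ), mul_zero, zero_mul]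
        · intro h; exact absurd (Finset.mem_univ μ) h

lemma unitary_right_aux {κ : Type*} [Fintype κ] [DecidableEq κ] (Q : Matrix κ κ ℍ[ℝ])
    (hQ : Qᴴ * Q = 1) (x : κ → ℍ[ℝ]) :
    ∑ ν, ‖∑ μ, x μ * star (Q ν μ)‖ ^ 2 = ∑ μ, ‖x μ‖ ^ 2 := by
  have key : ∀ μ ρ, ∑ ν, star (Q ν μ) * Q ν ρ = if μ = ρ then 1 else 0 := by
    intro μ ρ
    have := congrFun (congrFun hQ μ) ρ
    simpa [Matrix.mul_apply, Matrix.conjTranspose_apply, Matrix.one_apply] using this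
  simp only [normSq_eq_aux']
  rw [← re_sum', ← re_sum']
  congr 1
  calc ∑ ν, (∑ μ, x μ * star (Q ν μ)) * star (∑ μ, x μ * star (Q ν μ))
      = ∑ ν, ∑ μ, ∑ ρ, (x μ * star (Q ν μ)) * (Q ν ρ * star (x ρ)) := by
        simp only [star_sum, StarMul.star_mul, star_star, Finset.sum_mul_sum]
    _ = ∑ μ, ∑ ρ, x μ * (∑ ν, star (Q ν μ) * Q ν ρ) * star (x ρ) := by
        rw [Finset.sum_comm]
        refine Finset.sum_congr rfl fun μ _ => ?_
        rw [Finset.sum_comm]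
        refine Finset.sum_congr rfl fun ρ _ => ?_
        rw [Finset.mul_sum, Finset.sum_mul]
        exact Finset.sum_congr rfl fun ν _ => by noncomm_ring
    _ = ∑ μ, x μ * star (x μ) := by
        refine Finset.sum_congr rfl fun μ _ => ?_
        rw [Finset.sum_eq_single μ]
        · rw [key, if_pos rfl, mul_one]
        · intro ρ _ hρ; rw [key, if_neg (Ne.symm hρ), mul_zero, zero_mul]
        · intro h; exact absurd (Finset.mem_univ μ) h

omit [DecidableEq ι] in
lemma hatT_comp_aux (T S : Matrix ι ι ℍ[ℝ]) {m n : ℕ} (A : QT ι m n) :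
    hatT T (hatT S A) = hatT (T * S) A := by
  funext ν i j
  simp only [hatT, Matrix.mul_apply, Finset.mul_sum, Finset.sum_mul, mul_assoc]
  exact Finset.sum_comm

lemma hatT_one_aux {m n : ℕ} (A : QT ι m n) : hatT (1 : Matrix ι ι ℍ[ℝ]) A = A := by
  funext ν i j
  simp [hatT, Matrix.one_apply]

omit [DecidableEq ι] in
lemma hatT_sub_aux (T : Matrix ι ι ℍ[ℝ]) {m n : ℕ} (A B : QT ι m n) :
    hatT T (A - B) = hatT T A - hatT T B := by
  funext ν i j
  simp [hatT, mul_sub, Finset.sum_sub_distrib]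

lemma frobM_left_aux {m n : ℕ} (P : Matrix (Fin m) (Fin m) ℍ[ℝ]) (hP : Pᴴ * P = 1)
    (M : Matrix (Fin m) (Fin n) ℍ[ℝ]) :
    ∑ i, ∑ j, ‖(P * M) i j‖ ^ 2 = ∑ i, ∑ j, ‖M i j‖ ^ 2 := by
  calc ∑ i, ∑ j, ‖(P * M) i j‖ ^ 2 = ∑ j, ∑ i, ‖(P * M) i j‖ ^ 2 := Finset.sum_comm
    _ = ∑ j, ∑ i, ‖M i j‖ ^ 2 := Finset.sum_congr rfl fun j _ => by
        simpa [Matrix.mul_apply] using unitary_left_aux P hP (fun μ => M μ j)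
    _ = ∑ i, ∑ j, ‖M i j‖ ^ 2 := Finset.sum_comm

lemma frobM_right_aux {m n : ℕ} (Q : Matrix (Fin n) (Fin n) ℍ[ℝ]) (hQ : Qᴴ * Q = 1)
    (M : Matrix (Fin m) (Fin n) ℍ[ℝ]) :
    ∑ i, ∑ j, ‖(M * Qᴴ) i j‖ ^ 2 = ∑ i, ∑ j, ‖M i j‖ ^ 2 := by
  refine Finset.sum_congr rfl fun i _ => ?_
  simpa [Matrix.mul_apply, Matrix.conjTranspose_apply] using
    unitary_right_aux Q hQ (fun μ => M i μ)

lemma diag_sub_sq_aux (f : ℕ → ℝ) (s : ℕ) (N1 N2 : ℕ) :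
    ∑ i, ∑ j, ‖(realDiag N1 N2 f - realDiagTrunc N1 N2 f s) i j‖ ^ 2
      = ∑ k ∈ Finset.Ico s (min N1 N2), f k ^ 2 := by
  have hE : ∀ (i : Fin N1) (j : Fin N2),
      ‖(realDiag N1 N2 f - realDiagTrunc N1 N2 f s) i j‖ ^ 2
        = if (i : ℕ) = (j : ℕ) ∧ s ≤ (i : ℕ) then f (i : ℕ) ^ 2 else 0 := by
    intro i j
    simp only [Matrix.sub_apply, realDiag, realDiagTrunc]
    by_cases hij : (i : ℕ) = (j : ℕ)
    · by_cases hsi : (i : ℕ) < s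
      · rw [if_pos hij, if_pos ⟨hij, hsi⟩, if_neg (fun h => by omega), sub_self]
        simp
      · rw [if_pos hij, if_neg (fun h => hsi h.2), sub_zero,
          if_pos ⟨hij, Nat.le_of_not_lt hsi⟩]
        simp [Quaternion.norm_coe, sq_abs]
    · rw [if_neg hij, if_neg (fun h => hij h.1), if_neg (fun h => hij h.1), sub_zero]
      simp
  simp only [hE]
  rw [Finset.sum_comm]
  have hinner : ∀ j : Fin N2,
      ∑ i : Fin N1, (if (i : ℕ) = (j : ℕ) ∧ s ≤ (i : ℕ) then f (i : ℕ) ^ 2 else 0)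
        = if (j : ℕ) < N1 ∧ s ≤ (j : ℕ) then f (j : ℕ) ^ 2 else 0 := by
    intro j
    rw [Fin.sum_univ_eq_sum_range (fun k => if k = (j : ℕ) ∧ s ≤ k then f k ^ 2 else 0)]
    by_cases hsj : s ≤ (j : ℕ)
    · by_cases hjN : (j : ℕ) < N1
      · rw [if_pos ⟨hjN, hsj⟩]
        rw [Finset.sum_eq_single (j : ℕ)]
        · simp [hsj]
        · intro k _ hk; exact if_neg (fun h => hk h.1)
        · intro h; exact absurd (Finset.mem_range.mpr hjN) h
      · rw [if_neg (fun h => hjN h.1)]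
        refine Finset.sum_eq_zero fun k hk => if_neg fun h => ?_
        have := Finset.mem_range.mp hk; omega
    · rw [if_neg (fun h => hsj h.2)]
      exact Finset.sum_eq_zero fun k hk => if_neg fun h => by omega
  calc ∑ j : Fin N2, ∑ i : Fin N1,
        (if (i : ℕ) = (j : ℕ) ∧ s ≤ (i : ℕ) then f (i : ℕ) ^ 2 else 0)
      = ∑ j : Fin N2, (if (j : ℕ) < N1 ∧ s ≤ (j : ℕ) then f (j : ℕ) ^ 2 else 0) :=
        Finset.sum_congr rfl fun j _ => hinner j
    _ = ∑ k ∈ Finset.Ico s (min N1 N2), f k ^ 2 := by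
        rw [Fin.sum_univ_eq_sum_range (fun k => if k < N1 ∧ s ≤ k then f k ^ 2 else 0)]
        rw [Finset.sum_ite, Finset.sum_const, smul_zero, add_zero]
        apply Finset.sum_congr _ (fun _ _ => rfl)
        ext k
        simp only [Finset.mem_filter, Finset.mem_range, Finset.mem_Ico, lt_min_iff]
        omega

/-- Eckart–Young error formula for the TQt-SVD truncation. -/
theorem stmt8 {ι : Type*} [Fintype ι] [DecidableEq ι]
    {K : ℕ} (cs : Fin K → ℝ) (hcs : ∀ k, cs k ≠ 0)
    (U₀ : Matrix ι ι ℍ[ℝ]) (hU₀ : qUnitaryM U₀)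
    (T S : Matrix ι ι ℍ[ℝ]) (hT : T = (∏ k, cs k) • U₀) (hS : S = (∏ k, cs k)⁻¹ • U₀ᴴ)
    {N1 N2 : ℕ} (A : QT ι N1 N2) (U : QT ι N1 N1) (D : QT ι N1 N2) (V : QT ι N2 N2)
    (hU : qtUnitary T S U) (hV : qtUnitary T S V)
    (σ : ι → ℕ → ℝ) (hD : ∀ ν, hatT T D ν = realDiag N1 N2 (σ ν))
    (hσ0 : ∀ ν k, 0 ≤ σ ν k) (hσa : ∀ ν, Antitone (σ ν))
    (hA : A = qt T S U (qt T S D (qtH T S V)))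
    (As : ℕ → QT ι N1 N2)
    (hAs : ∀ s, As s = qt T S U
      (qt T S (hatT S (fun ν => realDiagTrunc N1 N2 (σ ν) s)) (qtH T S V)))
    (s : ℕ) (hs : s ≤ tqtRank D) :
    frob (A - As s) ^ 2 =
      ((∏ k, cs k) ^ 2)⁻¹ * ∑ k ∈ Finset.Ico s (tqtRank D), tubeNorm (hatT T D) k ^ 2 ∧
    ((∏ k, |cs k|) = 1 →
      frob (A - As s) ^ 2 = ∑ k ∈ Finset.Ico s (tqtRank D), tubeNorm D k ^ 2) := by
  set c : ℝ := ∏ k, cs k with hc_def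
  have hc : c ≠ 0 := Finset.prod_ne_zero_iff.mpr fun k _ => hcs k
  -- inverse transform identities
  have hTS : T * S = 1 := by
    rw [hT, hS, Matrix.smul_mul, Matrix.mul_smul, hU₀.2, smul_smul,
      mul_inv_cancel₀ hc, one_smul]
  have hST : S * T = 1 := by
    rw [hT, hS, Matrix.smul_mul, Matrix.mul_smul, hU₀.1, smul_smul,
      inv_mul_cancel₀ hc, one_smul]
  have hatTS : ∀ {m n : ℕ} (X : QT ι m n), hatT T (hatT S X) = X := by
    intro m n X; rw [hatT_comp_aux, hTS, hatT_one_aux]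
  have hatST : ∀ {m n : ℕ} (X : QT ι m n), hatT S (hatT T X) = X := by
    intro m n X; rw [hatT_comp_aux, hST, hatT_one_aux]
  -- transform-domain slice unitarity
  have hUs : ∀ ν, (hatT T U ν)ᴴ * hatT T U ν = 1 := by
    intro ν
    have h := congrArg (hatT T) hU.1
    simp only [qt, qtH, qtId, hatTS] at h
    exact congrFun h ν
  have hVs : ∀ ν, (hatT T V ν)ᴴ * hatT T V ν = 1 := by
    intro ν
    have h := congrArg (hatT T) hV.1
    simp only [qt, qtH, qtId, hatTS] at h
    exact congrFun h ν
  -- transform-domain slices of A and As s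
  have hAhat : ∀ ν, hatT T A ν
      = hatT T U ν * (realDiag N1 N2 (σ ν) * (hatT T V ν)ᴴ) := by
    intro ν
    have h := congrArg (hatT T) hA
    simp only [qt, qtH, qf, hatTS] at h
    rw [congrFun h ν]
    show hatT T U ν * (hatT T D ν * (hatT T V ν)ᴴ) = _
    rw [hD ν]
  have hAshat : ∀ ν, hatT T (As s) ν
      = hatT T U ν * (realDiagTrunc N1 N2 (σ ν) s * (hatT T V ν)ᴴ) := by
    intro ν
    have h := congrArg (hatT T) (hAs s)
    simp only [qt, qtH, qf, hatTS] at h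
    exact congrFun h ν
  have hdiff : ∀ ν, hatT T (A - As s) ν
      = hatT T U ν * ((realDiag N1 N2 (σ ν) - realDiagTrunc N1 N2 (σ ν) s)
          * (hatT T V ν)ᴴ) := by
    intro ν
    rw [hatT_sub_aux]
    show hatT T A ν - hatT T (As s) ν = _
    rw [hAhat ν, hAshat ν, ← Matrix.mul_sub, ← Matrix.sub_mul]
  -- effect of the inverse transform on squared norms of tube fibers
  have S_vec : ∀ (y : ι → ℍ[ℝ]),
      ∑ ν, ‖∑ μ, S ν μ * y μ‖ ^ 2 = (c ^ 2)⁻¹ * ∑ μ, ‖y μ‖ ^ 2 := by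
    intro y
    have hS' : ∀ ν μ, S ν μ = c⁻¹ • (U₀ᴴ ν μ) := by
      intro ν μ; rw [hS]; rfl
    calc ∑ ν, ‖∑ μ, S ν μ * y μ‖ ^ 2
        = ∑ ν, ‖c⁻¹ • ∑ μ, U₀ᴴ ν μ * y μ‖ ^ 2 := by
          simp only [hS', smul_mul_assoc, ← Finset.smul_sum]
      _ = (c ^ 2)⁻¹ * ∑ ν, ‖∑ μ, U₀ᴴ ν μ * y μ‖ ^ 2 := by
          rw [Finset.mul_sum]
          refine Finset.sum_congr rfl fun ν _ => ?_
          rw [norm_smul, mul_pow, Real.norm_eq_abs, sq_abs, inv_pow]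
      _ = (c ^ 2)⁻¹ * ∑ μ, ‖y μ‖ ^ 2 := by
          rw [unitary_left_aux U₀ᴴ (by rw [Matrix.conjTranspose_conjTranspose, hU₀.2]) y]
  -- squared Frobenius norms as plain sums
  have frob_sq : ∀ (X : QT ι N1 N2),
      frob X ^ 2 = ∑ ν, ∑ i, ∑ j, ‖X ν i j‖ ^ 2 := by
    intro X; rw [frob, Real.sq_sqrt (by positivity)]
  have tubeNorm_sq : ∀ {m n : ℕ} (X : QT ι m n) (k : ℕ),
      tubeNorm X k ^ 2 = ∑ ν, ‖diagTube X k ν‖ ^ 2 := by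
    intro m n X k; rw [tubeNorm, Real.sq_sqrt (by positivity)]
  -- the main Parseval-type identity for hatT S
  have frob_hatS : ∀ (C : QT ι N1 N2),
      frob (hatT S C) ^ 2 = (c ^ 2)⁻¹ * ∑ ν, ∑ i, ∑ j, ‖C ν i j‖ ^ 2 := by
    intro C
    rw [frob_sq]
    calc ∑ ν, ∑ i, ∑ j, ‖hatT S C ν i j‖ ^ 2
        = ∑ i, ∑ j, ∑ ν, ‖hatT S C ν i j‖ ^ 2 := by
          rw [Finset.sum_comm]
          exact Finset.sum_congr rfl fun i _ => Finset.sum_comm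
      _ = ∑ i, ∑ j, (c ^ 2)⁻¹ * ∑ ν, ‖C ν i j‖ ^ 2 := by
          refine Finset.sum_congr rfl fun i _ => Finset.sum_congr rfl fun j _ => ?_
          exact S_vec (fun μ => C μ i j)
      _ = (c ^ 2)⁻¹ * ∑ i, ∑ j, ∑ ν, ‖C ν i j‖ ^ 2 := by
          simp only [Finset.mul_sum]
      _ = (c ^ 2)⁻¹ * ∑ ν, ∑ i, ∑ j, ‖C ν i j‖ ^ 2 := by
          congr 1
          exact (Finset.sum_comm.trans
            (Finset.sum_congr rfl fun i _ => Finset.sum_comm)).symm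
  -- the per-slice computation
  have slice : ∀ ν, ∑ i, ∑ j, ‖hatT T (A - As s) ν i j‖ ^ 2
      = ∑ k ∈ Finset.Ico s (min N1 N2), σ ν k ^ 2 := by
    intro ν
    have h1 : hatT T (A - As s) ν
        = hatT T U ν * ((realDiag N1 N2 (σ ν) - realDiagTrunc N1 N2 (σ ν) s)
            * (hatT T V ν)ᴴ) := hdiff ν
    rw [h1, frobM_left_aux _ (hUs ν), frobM_right_aux _ (hVs ν), diag_sub_sq_aux]
  -- the tube norms in the transform domain
  have q_def : ∀ k, k < min N1 N2 → tubeNorm (hatT T D) k ^ 2 = ∑ ν, σ ν k ^ 2 := by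
    intro k hk
    rw [tubeNorm_sq]
    refine Finset.sum_congr rfl fun ν _ => ?_
    have hk12 : k < N1 ∧ k < N2 := lt_min_iff.mp hk
    rw [diagTube, dif_pos hk12, hD ν, realDiag, if_pos rfl]
    simp [Quaternion.norm_coe, sq_abs]
  -- relation between space-domain and transform-domain tube norms
  have tubeD : ∀ k, tubeNorm D k ^ 2 = (c ^ 2)⁻¹ * tubeNorm (hatT T D) k ^ 2 := by
    intro k
    have hy : ∀ ν, diagTube D k ν = ∑ μ, S ν μ * diagTube (hatT T D) k μ := by
      intro ν
      by_cases hk : k < N1 ∧ k < N2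
      · simp only [diagTube, dif_pos hk]
        conv_lhs => rw [(hatST D).symm]
        rfl
      · simp [diagTube, dif_neg hk]
    rw [tubeNorm_sq, tubeNorm_sq]
    simp only [hy]
    exact S_vec (diagTube (hatT T D) k)
  -- rank facts
  have hrmin : tqtRank D ≤ min N1 N2 := by
    have := Finset.card_filter_le (Finset.range (min N1 N2)) (fun k => 0 < tubeNorm D k)
    rwa [Finset.card_range] at this
  have hq_nonneg : ∀ k, (0:ℝ) ≤ ∑ ν, σ ν k ^ 2 := fun k => by positivity
  have hq_anti : ∀ j k, j ≤ k → ∑ ν, σ ν k ^ 2 ≤ ∑ ν, σ ν j ^ 2 := by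
    intro j k hjk
    exact Finset.sum_le_sum fun ν _ => pow_le_pow_left₀ (hσ0 ν k) (hσa ν hjk) 2
  have hc2pos : (0:ℝ) < (c ^ 2)⁻¹ := by positivity
  have htube_pos : ∀ k, k < min N1 N2 → ((0:ℝ) < tubeNorm D k ↔ (∑ ν, σ ν k ^ 2) ≠ 0) := by
    intro k hk
    have hsq : tubeNorm D k ^ 2 = (c ^ 2)⁻¹ * ∑ ν, σ ν k ^ 2 := by
      rw [tubeD, q_def k hk]
    constructor
    · intro hpos h0
      have : tubeNorm D k ^ 2 = 0 := by rw [hsq, h0, mul_zero]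
      exact absurd (pow_eq_zero_iff two_ne_zero |>.mp this) (ne_of_gt hpos)
    · intro h0
      have hqpos : 0 < ∑ ν, σ ν k ^ 2 := lt_of_le_of_ne (hq_nonneg k) (Ne.symm h0)
      have : 0 < tubeNorm D k ^ 2 := by rw [hsq]; positivity
      have hnn : 0 ≤ tubeNorm D k := Real.sqrt_nonneg _
      rcases lt_or_eq_of_le hnn with h | h
      · exact h
      · rw [← h] at this; simp at this
  have hq_zero : ∀ k, tqtRank D ≤ k → k < min N1 N2 → ∑ ν, σ ν k ^ 2 = 0 := by
    intro k hrk hkm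
    by_contra hq
    have hpos : ∀ j, j ≤ k → 0 < tubeNorm D j := by
      intro j hj
      have hjm : j < min N1 N2 := lt_of_le_of_lt hj hkm
      refine (htube_pos j hjm).mpr fun h0 => hq ?_
      exact le_antisymm (h0 ▸ hq_anti j k hj) (hq_nonneg k)
    have hsub : Finset.range (k + 1)
        ⊆ (Finset.range (min N1 N2)).filter (fun k => 0 < tubeNorm D k) := by
      intro j hj
      have hj' := Finset.mem_range.mp hj
      exact Finset.mem_filter.mpr ⟨Finset.mem_range.mpr (by omega), hpos j (by omega)⟩
    have hcard := Finset.card_le_card hsub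
    rw [Finset.card_range] at hcard
    have : k + 1 ≤ tqtRank D := hcard
    omega
  -- splitting the sum
  have hsplit : ∑ k ∈ Finset.Ico s (min N1 N2), ∑ ν, σ ν k ^ 2
      = ∑ k ∈ Finset.Ico s (tqtRank D), ∑ ν, σ ν k ^ 2 := by
    have hzero : ∑ k ∈ Finset.Ico (tqtRank D) (min N1 N2), ∑ ν, σ ν k ^ 2 = 0 :=
      Finset.sum_eq_zero fun k hk =>
        hq_zero k (Finset.mem_Ico.mp hk).1 (Finset.mem_Ico.mp hk).2
    rw [← Finset.sum_Ico_consecutive _ hs hrmin, hzero, add_zero]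
  -- the first conjunct
  have main : frob (A - As s) ^ 2
      = (c ^ 2)⁻¹ * ∑ k ∈ Finset.Ico s (tqtRank D), tubeNorm (hatT T D) k ^ 2 := by
    calc frob (A - As s) ^ 2
        = frob (hatT S (hatT T (A - As s))) ^ 2 := by rw [hatST]
      _ = (c ^ 2)⁻¹ * ∑ ν, ∑ i, ∑ j, ‖hatT T (A - As s) ν i j‖ ^ 2 :=
          frob_hatS _
      _ = (c ^ 2)⁻¹ * ∑ ν, ∑ k ∈ Finset.Ico s (min N1 N2), σ ν k ^ 2 := by
          rw [Finset.sum_congr rfl fun ν _ => slice ν]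
      _ = (c ^ 2)⁻¹ * ∑ k ∈ Finset.Ico s (min N1 N2), ∑ ν, σ ν k ^ 2 := by
          rw [Finset.sum_comm]
      _ = (c ^ 2)⁻¹ * ∑ k ∈ Finset.Ico s (tqtRank D), ∑ ν, σ ν k ^ 2 := by
          rw [hsplit]
      _ = (c ^ 2)⁻¹ * ∑ k ∈ Finset.Ico s (tqtRank D), tubeNorm (hatT T D) k ^ 2 := by
          congr 1
          refine Finset.sum_congr rfl fun k hk => ?_
          have hk' := Finset.mem_Ico.mp hk
          exact (q_def k (lt_of_lt_of_le hk'.2 hrmin)).symm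
  refine ⟨main, fun habs => ?_⟩
  have hc2 : c ^ 2 = 1 := by
    have h1 : c ^ 2 = |c| ^ 2 := (sq_abs c).symm
    rw [h1, hc_def, Finset.abs_prod, habs, one_pow]
  rw [main, hc2, inv_one, one_mul]
  refine Finset.sum_congr rfl fun k hk => ?_
  rw [tubeD k, hc2, inv_one, one_mul]
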